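/- The Parshin symbol of monomials is multiplicative in each argument: fix n ≥ 1, c₂, …, c_{n+1} ∈ ℂ* and k₂, …, k_{n+1} ∈ ℤ^n. If c₁ = a·b with a, b ∈ ℂ* and k₁ = l + m with l, m ∈ ℤ^n, then [c₁ z^{k₁}, c₂ z^{k₂}, …, c_{n+1} z^{k_{n+1}}] = [a z^{l}, c₂ z^{k₂}, …, c_{n+1} z^{k_{n+1}}] · [b z^{m}, c₂ z^{k₂}, …, c_{n+1} z^{k_{n+1}}]. -/

import Mathlib

/-- For `i < j` in `{0, …, n}`, the `t`-th element (in increasing order) of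
`{0, …, n} \ {i, j}`. -/
def omitTwo {n : ℕ} (i j : Fin (n + 1)) (t : Fin (n - 1)) : Fin (n + 1) :=
  if (t : ℕ) < (i : ℕ) then ⟨t, by omega⟩
  else if (t : ℕ) + 1 < (j : ℕ) then ⟨(t : ℕ) + 1, by have := t.isLt; omega⟩
  else ⟨(t : ℕ) + 2, by have := t.isLt; omega⟩

/-- `Δ_{ij}`: the determinant over `𝔽₂` of the `n × n` matrix whose first `n - 1` columns are
`w₁, …, w_{n+1}` with `w_i`, `w_j` omitted (in increasing order of index) and whose last
column is the coordinatewise product of `w_i` and `w_j`. -/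
def DeltaIJ (n : ℕ) (w : Fin (n + 1) → Fin n → ZMod 2) (i j : Fin (n + 1)) : ZMod 2 :=
  Matrix.det (Matrix.of fun r c : Fin n =>
    if h : (c : ℕ) < n - 1 then w (omitTwo i j ⟨c, h⟩) r else w i r * w j r)

/-- `D(w₁, …, w_{n+1}) = ∑_{i < j} Δ_{ij}`. -/
def D₂ (n : ℕ) (w : Fin (n + 1) → Fin n → ZMod 2) : ZMod 2 :=
  ∑ p ∈ Finset.univ.filter (fun p : Fin (n + 1) × Fin (n + 1) => p.1 < p.2),
    DeltaIJ n w p.1 p.2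

/-- The Parshin symbol `[c₁ z^{k₁}, …, c_{n+1} z^{k_{n+1}}]` of `n + 1` monomials in `n`
variables: `(-1)^{D(k̄₁, …, k̄_{n+1})} ∏ᵢ cᵢ^{(-1)ⁱ det(k₁, …, k̂ᵢ, …, k_{n+1})}`, where `k̄`
denotes mod-2 reduction (indices `i` are 1-based, so the 0-based index `i : Fin (n+1)`
contributes the sign `(-1)^{i+1}`). -/
noncomputable def parshinSymbol (n : ℕ) (c : Fin (n + 1) → ℂ)
    (k : Fin (n + 1) → Fin n → ℤ) : ℂ :=
  (if D₂ n (fun t r => ((k t r : ℤ) : ZMod 2)) = 0 then (1 : ℂ) else -1) *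
    ∏ i : Fin (n + 1),
      c i ^ ((-1 : ℤ) ^ ((i : ℕ) + 1) *
        Matrix.det (Matrix.of fun r c' : Fin n => k (i.succAbove c') r))

lemma det_if_add {R : Type*} [CommRing R] {n : ℕ} (g : Fin n → Fin n → R) (c₀ : Fin n)
    (u v : Fin n → R) :
    Matrix.det (Matrix.of fun r c => if c = c₀ then u r + v r else g r c) =
      Matrix.det (Matrix.of fun r c => if c = c₀ then u r else g r c) +
      Matrix.det (Matrix.of fun r c => if c = c₀ then v r else g r c) := by
  have h : ∀ x : Fin n → R,
      (Matrix.of fun r c => if c = c₀ then x r else g r c) =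
        (Matrix.of g).updateCol c₀ x := by
    intro x; ext r c; simp [Matrix.updateCol_apply]
  have h' : (Matrix.of fun r c => if c = c₀ then u r + v r else g r c) =
      (Matrix.of g).updateCol c₀ (u + v) := by
    ext r c; simp [Matrix.updateCol_apply]
  rw [h u, h v, h', Matrix.det_updateCol_add]

lemma deltaIJ_update_add (n : ℕ) (hn : 1 ≤ n) (w : Fin (n + 1) → Fin n → ZMod 2)
    (u v : Fin n → ZMod 2) (i j : Fin (n + 1)) (hij : i < j) :
    DeltaIJ n (Function.update w 0 (u + v)) i j =
      DeltaIJ n (Function.update w 0 u) i j + DeltaIJ n (Function.update w 0 v) i j := by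
  have hj0 : j ≠ 0 := by
    intro h; subst h; exact absurd hij (by simp [Fin.lt_def])
  by_cases hi : i = 0
  · subst hi
    set c₀ : Fin n := ⟨n - 1, by omega⟩ with hc₀
    set g : Fin n → Fin n → ZMod 2 := fun r c =>
      if h : (c : ℕ) < n - 1 then w (omitTwo 0 j ⟨c, h⟩) r else 0 with hg
    have key : ∀ x : Fin n → ZMod 2,
        DeltaIJ n (Function.update w 0 x) 0 j =
          Matrix.det (Matrix.of fun r c => if c = c₀ then x r * w j r else g r c) := by
      intro x
      unfold DeltaIJ
      congr 1
      ext r c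
      by_cases h : (c : ℕ) < n - 1
      · have hcne : c ≠ c₀ := by
          intro e; rw [e] at h; simp [hc₀] at h
        have hom : omitTwo 0 j ⟨c, h⟩ ≠ 0 := by
          unfold omitTwo
          split_ifs with h1 h2
          · exfalso; simp at h1
          · simp [Fin.ext_iff]
          · simp [Fin.ext_iff]
        simp only [Matrix.of_apply, dif_pos h, if_neg hcne, hg]
        rw [Function.update_of_ne hom]
      · have hceq : c = c₀ := by
          have := c.isLt; exact Fin.ext (by simp [hc₀]; omega)
        simp only [Matrix.of_apply, dif_neg h, if_pos hceq]
        rw [Function.update_self, Function.update_of_ne hj0]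
    rw [key, key, key]
    simp only [Pi.add_apply, add_mul]
    exact det_if_add g c₀ (fun r => u r * w j r) (fun r => v r * w j r)
  · have hi1 : 1 ≤ (i : ℕ) := by
      rcases Nat.eq_zero_or_pos (i : ℕ) with h | h
      · exact absurd (Fin.ext h) hi
      · exact h
    have hj2 : 2 ≤ (j : ℕ) := by
      have := hij; rw [Fin.lt_def] at this; omega
    have hn2 : 2 ≤ n := by have := j.isLt; omega
    set c₀ : Fin n := ⟨0, by omega⟩ with hc₀
    set g : Fin n → Fin n → ZMod 2 := fun r c =>
      if h : (c : ℕ) < n - 1 then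
        (if (c : ℕ) = 0 then 0 else w (omitTwo i j ⟨c, h⟩) r)
      else w i r * w j r with hg
    have key : ∀ x : Fin n → ZMod 2,
        DeltaIJ n (Function.update w 0 x) i j =
          Matrix.det (Matrix.of fun r c => if c = c₀ then x r else g r c) := by
      intro x
      unfold DeltaIJ
      congr 1
      ext r c
      by_cases hc : c = c₀
      · subst hc
        have h : ((c₀ : Fin n) : ℕ) < n - 1 := by simp [hc₀]; omega
        have hom : omitTwo i j ⟨c₀, h⟩ = 0 := by
          unfold omitTwo
          rw [if_pos (by show (0 : ℕ) < (i : ℕ); omega)]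
          exact Fin.ext (by simp [hc₀])
        simp only [Matrix.of_apply, dif_pos h, hom, Function.update_self, if_pos rfl, if_true]
      · by_cases h : (c : ℕ) < n - 1
        · have hc1 : 1 ≤ (c : ℕ) := by
            rcases Nat.eq_zero_or_pos (c : ℕ) with h' | h'
            · exact absurd (Fin.ext (by simp [hc₀, h'])) hc
            · exact h'
          have hom : omitTwo i j ⟨c, h⟩ ≠ 0 := by
            unfold omitTwo
            split_ifs with h1 h2 <;> simp [Fin.ext_iff] <;> omega
          simp only [Matrix.of_apply, dif_pos h, if_neg hc, hg,
            if_neg (by omega : ¬ (c : ℕ) = 0)]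
          rw [Function.update_of_ne hom]
        · simp only [Matrix.of_apply, dif_neg h, if_neg hc, hg]
          rw [Function.update_of_ne hi, Function.update_of_ne hj0]
    rw [key, key, key]
    simp only [Pi.add_apply]
    exact det_if_add g c₀ u v


lemma D₂_update_add (n : ℕ) (hn : 1 ≤ n) (w : Fin (n + 1) → Fin n → ZMod 2)
    (u v : Fin n → ZMod 2) :
    D₂ n (Function.update w 0 (u + v)) =
      D₂ n (Function.update w 0 u) + D₂ n (Function.update w 0 v) := by
  unfold D₂
  rw [← Finset.sum_add_distrib]
  refine Finset.sum_congr rfl fun p hp => ?_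
  rw [Finset.mem_filter] at hp
  exact deltaIJ_update_add n hn w u v p.1 p.2 hp.2

lemma sign_add (x y : ZMod 2) :
    (if x + y = 0 then (1 : ℂ) else -1) =
      (if x = 0 then (1 : ℂ) else -1) * (if y = 0 then (1 : ℂ) else -1) := by
  have hx : x = 0 ∨ x = 1 := by fin_cases x; exacts [Or.inl rfl, Or.inr rfl]
  have hy : y = 0 ∨ y = 1 := by fin_cases y; exacts [Or.inl rfl, Or.inr rfl]
  rcases hx with rfl | rfl <;> rcases hy with rfl | rfl <;>
    simp only [show (1 : ZMod 2) + 1 = 0 from rfl, add_zero, zero_add] <;>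
    norm_num [show (1 : ZMod 2) ≠ 0 from by decide,
      show (2 : ZMod 2) = 0 from rfl]

/-- The Parshin symbol of monomials is multiplicative in each argument:
if `c₁ = a·b` and `k₁ = l + m`, then
`[c₁ z^{k₁}, c₂ z^{k₂}, …] = [a z^l, c₂ z^{k₂}, …] · [b z^m, c₂ z^{k₂}, …]`. -/
theorem stmt12 (n : ℕ) (hn : 1 ≤ n) (c : Fin (n + 1) → ℂ) (hc : ∀ i, c i ≠ 0)
    (k : Fin (n + 1) → Fin n → ℤ)
    (a b : ℂ) (ha : a ≠ 0) (hb : b ≠ 0) (l m : Fin n → ℤ)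
    (hc₁ : c 0 = a * b) (hk₁ : k 0 = l + m) :
    parshinSymbol n c k =
      parshinSymbol n (Function.update c 0 a) (Function.update k 0 l) *
        parshinSymbol n (Function.update c 0 b) (Function.update k 0 m) := by
  classical
  set kl := Function.update k 0 l with hkl
  set km := Function.update k 0 m with hkm
  set w : Fin (n + 1) → Fin n → ZMod 2 := fun t r => ((k t r : ℤ) : ZMod 2) with hw
  set ub : Fin n → ZMod 2 := fun r => ((l r : ℤ) : ZMod 2) with hub
  set vb : Fin n → ZMod 2 := fun r => ((m r : ℤ) : ZMod 2) with hvb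
  -- mod-2 reductions
  have hred : ∀ (x : Fin n → ℤ),
      (fun t r => ((Function.update k 0 x t r : ℤ) : ZMod 2)) =
        Function.update w 0 (fun r => ((x r : ℤ) : ZMod 2)) := by
    intro x
    funext t
    by_cases ht : t = 0
    · subst ht; simp
    · rw [Function.update_of_ne ht, Function.update_of_ne ht]
  have hredk : (fun t r => ((k t r : ℤ) : ZMod 2)) = Function.update w 0 (ub + vb) := by
    funext t r
    by_cases ht : t = 0
    · subst ht
      rw [Function.update_self, hk₁]
      simp [hub, hvb]
    · rw [Function.update_of_ne ht]
  -- sign part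
  have hsign : (if D₂ n (fun t r => ((k t r : ℤ) : ZMod 2)) = 0 then (1 : ℂ) else -1) =
      (if D₂ n (fun t r => ((kl t r : ℤ) : ZMod 2)) = 0 then (1 : ℂ) else -1) *
        (if D₂ n (fun t r => ((km t r : ℤ) : ZMod 2)) = 0 then (1 : ℂ) else -1) := by
    rw [hredk, hkl, hkm, hred l, hred m, D₂_update_add n hn w ub vb]
    exact sign_add _ _
  -- determinant for index 0 : independent of the 0-th row of k
  have hdet0 : ∀ (x : Fin n → ℤ),
      Matrix.det (Matrix.of fun r c' : Fin n =>
          Function.update k 0 x ((0 : Fin (n + 1)).succAbove c') r) =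
        Matrix.det (Matrix.of fun r c' : Fin n => k ((0 : Fin (n + 1)).succAbove c') r) := by
    intro x
    have he : (Matrix.of fun r c' : Fin n =>
          Function.update k 0 x ((0 : Fin (n + 1)).succAbove c') r) =
        (Matrix.of fun r c' : Fin n => k ((0 : Fin (n + 1)).succAbove c') r) := by
      ext r c'
      have hne : (0 : Fin (n + 1)).succAbove c' ≠ 0 := Fin.succAbove_ne _ _
      simp only [Matrix.of_apply]
      rw [Function.update_of_ne hne]
    rw [he]
  -- determinant for index i.succ : additive
  have hdetsucc : ∀ i : Fin n,
      Matrix.det (Matrix.of fun r c' : Fin n => k ((i.succ).succAbove c') r) =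
        Matrix.det (Matrix.of fun r c' : Fin n => kl ((i.succ).succAbove c') r) +
          Matrix.det (Matrix.of fun r c' : Fin n => km ((i.succ).succAbove c') r) := by
    intro i
    have hz : 0 < n := hn
    set c₀ : Fin n := ⟨0, hz⟩ with hc₀
    set g : Fin n → Fin n → ℤ := fun r c' => if (c' : ℕ) = 0 then 0
      else k ((i.succ).succAbove c') r with hg
    have hsa0 : (i.succ).succAbove c₀ = 0 := by
      rw [Fin.succAbove_of_castSucc_lt]
      · exact Fin.ext (by simp [hc₀])
      · simp [hc₀, Fin.lt_def]
    have hsane : ∀ c' : Fin n, c' ≠ c₀ → (i.succ).succAbove c' ≠ 0 := by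
      intro c' hne
      have hc1 : 1 ≤ (c' : ℕ) := by
        rcases Nat.eq_zero_or_pos (c' : ℕ) with h' | h'
        · exact absurd (Fin.ext (by simp [hc₀, h'])) hne
        · exact h'
      unfold Fin.succAbove
      split_ifs <;> simp [Fin.ext_iff] <;> try omega
    have key : ∀ (x : Fin n → ℤ),
        Matrix.det (Matrix.of fun r c' : Fin n =>
            Function.update k 0 x ((i.succ).succAbove c') r) =
          Matrix.det (Matrix.of fun r c' => if c' = c₀ then x r else g r c') := by
      intro x
      congr 1
      ext r c'
      by_cases hce : c' = c₀
      · subst hce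
        simp [hsa0]
      · simp only [Matrix.of_apply, if_neg hce, hg]
        rw [Function.update_of_ne (hsane c' hce)]
        have : ¬ (c' : ℕ) = 0 := by
          intro h'; exact hce (Fin.ext (by simp [hc₀, h']))
        rw [if_neg this]
    have hk' : k = Function.update k 0 (l + m) := by
      rw [← hk₁, Function.update_eq_self]
    rw [hkl, hkm, key l, key m]
    conv_lhs => rw [hk', key (l + m)]
    simp only [Pi.add_apply]
    exact det_if_add g c₀ l m
  -- assemble
  unfold parshinSymbol
  rw [hsign]
  rw [Fin.prod_univ_succ, Fin.prod_univ_succ, Fin.prod_univ_succ]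
  have hca : Function.update c 0 a 0 = a := Function.update_self _ _ _
  have hcb : Function.update c 0 b 0 = b := Function.update_self _ _ _
  have hcs : ∀ i : Fin n, Function.update c 0 a i.succ = c i.succ ∧
      Function.update c 0 b i.succ = c i.succ := by
    intro i
    constructor <;> exact Function.update_of_ne (Fin.succ_ne_zero i) _ _
  -- factor for index 0
  have h0 : c 0 ^ ((-1 : ℤ) ^ ((0 : Fin (n + 1)) : ℕ).succ *
        Matrix.det (Matrix.of fun r c' : Fin n => k ((0 : Fin (n + 1)).succAbove c') r)) =
      (Function.update c 0 a 0 ^ ((-1 : ℤ) ^ ((0 : Fin (n + 1)) : ℕ).succ *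
          Matrix.det (Matrix.of fun r c' : Fin n => kl ((0 : Fin (n + 1)).succAbove c') r))) *
        (Function.update c 0 b 0 ^ ((-1 : ℤ) ^ ((0 : Fin (n + 1)) : ℕ).succ *
          Matrix.det (Matrix.of fun r c' : Fin n => km ((0 : Fin (n + 1)).succAbove c') r))) := by
    rw [hca, hcb, hkl, hkm, hdet0 l, hdet0 m, hc₁, mul_zpow]
  have hprod : (∏ i : Fin n, c i.succ ^ ((-1 : ℤ) ^ ((i.succ : ℕ) + 1) *
        Matrix.det (Matrix.of fun r c' : Fin n => k ((i.succ).succAbove c') r))) =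
      (∏ i : Fin n, Function.update c 0 a i.succ ^ ((-1 : ℤ) ^ ((i.succ : ℕ) + 1) *
          Matrix.det (Matrix.of fun r c' : Fin n => kl ((i.succ).succAbove c') r))) *
        (∏ i : Fin n, Function.update c 0 b i.succ ^ ((-1 : ℤ) ^ ((i.succ : ℕ) + 1) *
          Matrix.det (Matrix.of fun r c' : Fin n => km ((i.succ).succAbove c') r))) := by
    rw [← Finset.prod_mul_distrib]
    refine Finset.prod_congr rfl fun i _ => ?_
    rw [(hcs i).1, (hcs i).2, hdetsucc i, mul_add, zpow_add₀ (hc i.succ)]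
  simp only [Nat.succ_eq_add_one] at h0 ⊢
  rw [h0, hprod]
  ring
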